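/- Let m be a positive integer, ξ = exp(2πi·a/m) for some a coprime to m, and L a symmetric n×n integer matrix with b₊ positive and b₋ negative eigenvalues and det L ≠ 0. Assume the Gauss sum g = ∑_{i ∈ ℤ/m} ξ^{i²} is nonzero. Then the quantity (∑_{x ∈ (ℤ/m)^n} ξ^{txLx}) · g^{-b₊} · ḡ^{-b₋} is invariant under stabilization L ↦ L ⊕ (±1), i.e., replacing L by the block matrix with an extra diagonal entry ±1 leaves the quantity unchanged. -/

import Mathlib

open Matrix

/-- Number of positive eigenvalues of a real symmetric (Hermitian) matrix. -/
noncomputable def bplus {ι : Type*} [Fintype ι] [DecidableEq ι]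
    (A : Matrix ι ι ℝ) : ℕ :=
  if h : A.IsHermitian then Fintype.card {i // 0 < h.eigenvalues i} else 0

/-- Number of negative eigenvalues of a real symmetric (Hermitian) matrix. -/
noncomputable def bminus {ι : Type*} [Fintype ι] [DecidableEq ι]
    (A : Matrix ι ι ℝ) : ℕ :=
  if h : A.IsHermitian then Fintype.card {i // h.eigenvalues i < 0} else 0

/-- The (unnormalized) Murakami–Ohtsuki–Okada quantity of an integer matrix `L`:
`(∑_{x ∈ (ℤ/m)^n} ξ^{ᵗxLx}) · g^{-b₊} · ḡ^{-b₋}`. -/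
noncomputable def mooQuantity {ι : Type*} [Fintype ι] [DecidableEq ι]
    (m : ℕ) (ξ g : ℂ) (L : Matrix ι ι ℤ) : ℂ :=
  (∑ x : ι → Fin m, ξ ^ ((fun i => ((x i : ℕ) : ℤ)) ⬝ᵥ L.mulVec fun i => ((x i : ℕ) : ℤ)))
    * g ^ (-(bplus (L.map (Int.cast : ℤ → ℝ)) : ℤ))
    * (starRingEnd ℂ g) ^ (-(bminus (L.map (Int.cast : ℤ → ℝ)) : ℤ))

section Aux

open Polynomial

variable {ι : Type*} [Fintype ι] [DecidableEq ι]

lemma MOO.charpoly_unitary_conj (U : Matrix.unitaryGroup ι ℝ) (D : Matrix ι ι ℝ) :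
    ((U : Matrix ι ι ℝ) * D * star (U : Matrix ι ι ℝ)).charpoly = D.charpoly := by
  have hU : (U : Matrix ι ι ℝ) * star (U : Matrix ι ι ℝ) = 1 :=
    Matrix.mem_unitaryGroup_iff.mp U.2
  let f : Matrix ι ι ℝ →+* Matrix ι ι ℝ[X] := (C : ℝ →+* ℝ[X]).mapMatrix
  have key : charmatrix ((U : Matrix ι ι ℝ) * D * star (U : Matrix ι ι ℝ))
      = f (U : Matrix ι ι ℝ) * charmatrix D * f (star (U : Matrix ι ι ℝ)) := by
    rw [charmatrix, charmatrix, mul_sub, sub_mul, _root_.map_mul f, _root_.map_mul f]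
    congr 1
    have hc : f (U : Matrix ι ι ℝ) * Matrix.scalar ι (X : ℝ[X]) * f (star (U : Matrix ι ι ℝ))
        = Matrix.scalar ι (X : ℝ[X]) * (f (U : Matrix ι ι ℝ) * f (star (U : Matrix ι ι ℝ))) := by
      rw [← (Matrix.scalar_commute (X : ℝ[X]) (fun r => Commute.all _ _)
        (f (U : Matrix ι ι ℝ))).eq, mul_assoc]
    rw [hc, ← _root_.map_mul f, hU, _root_.map_one f, mul_one]
  rw [Matrix.charpoly, Matrix.charpoly, key, det_mul, det_mul]
  have hdetmul : (f (U : Matrix ι ι ℝ)).det * (f (star (U : Matrix ι ι ℝ))).det = 1 := by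
    rw [← det_mul, ← _root_.map_mul f, hU, _root_.map_one f, det_one]
  calc (f (U : Matrix ι ι ℝ)).det * (charmatrix D).det * (f (star (U : Matrix ι ι ℝ))).det
      = ((f (U : Matrix ι ι ℝ)).det * (f (star (U : Matrix ι ι ℝ))).det)
          * (charmatrix D).det := by ring
    _ = (charmatrix D).det := by rw [hdetmul, one_mul]

lemma MOO.charpoly_diagonal (d : ι → ℝ) :
    (Matrix.diagonal d).charpoly = ∏ i, (X - C (d i)) := by
  have : charmatrix (Matrix.diagonal d) = Matrix.diagonal fun i => X - C (d i) := by
    ext i j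
    by_cases h : i = j
    · subst h; simp
    · simp [h, Matrix.diagonal_apply_ne _ h]
  rw [Matrix.charpoly, this, det_diagonal]

lemma MOO.hermitian_charpoly {A : Matrix ι ι ℝ} (hA : A.IsHermitian) :
    A.charpoly = ∏ i, (X - C (hA.eigenvalues i)) := by
  conv_lhs => rw [hA.spectral_theorem]
  rw [Unitary.conjStarAlgAut_apply, MOO.charpoly_unitary_conj (Matrix.IsHermitian.eigenvectorUnitary hA)]
  have : (RCLike.ofReal ∘ hA.eigenvalues : ι → ℝ) = hA.eigenvalues := by
    funext i; simp
  rw [this, MOO.charpoly_diagonal]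

lemma MOO.hermitian_roots {A : Matrix ι ι ℝ} (hA : A.IsHermitian) :
    A.charpoly.roots = Finset.univ.val.map hA.eigenvalues := by
  rw [MOO.hermitian_charpoly hA]
  have : (∏ i, (X - C (hA.eigenvalues i)))
      = ((Finset.univ.val.map hA.eigenvalues).map fun a => X - C a).prod := by
    rw [Multiset.map_map]; rfl
  rw [this, Polynomial.roots_multiset_prod_X_sub_C]

lemma MOO.hermitian_count {A : Matrix ι ι ℝ} (hA : A.IsHermitian)
    (p : ℝ → Prop) [DecidablePred p] :
    Fintype.card {i // p (hA.eigenvalues i)} = A.charpoly.roots.countP p := by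
  rw [MOO.hermitian_roots hA, Multiset.countP_map, Fintype.card_subtype,
    Finset.card_def, Finset.filter_val]

lemma MOO.charpoly_const_unit (d : ℝ) :
    (Matrix.of fun (_ _ : Unit) => d).charpoly = X - C d := by
  rw [Matrix.charpoly, Matrix.det_unique, charmatrix_apply_eq]
  rfl

lemma MOO.hermitian_map_int {L : Matrix ι ι ℤ} (hL : L.IsSymm) :
    (L.map (Int.cast : ℤ → ℝ)).IsHermitian := by
  ext i j
  simp [Matrix.conjTranspose_apply, Matrix.map_apply, hL.apply i j]

lemma MOO.hermitian_fromBlocks {A : Matrix ι ι ℝ} (hA : A.IsHermitian) (d : ℝ) :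
    (Matrix.fromBlocks A 0 0 (Matrix.of fun (_ _ : Unit) => d)).IsHermitian := by
  have hE : (Matrix.of fun (_ _ : Unit) => d).IsHermitian := by
    ext i j; simp [Matrix.conjTranspose_apply]
  rw [Matrix.IsHermitian, Matrix.fromBlocks_conjTranspose, hA.eq, hE.eq,
    Matrix.conjTranspose_zero, Matrix.conjTranspose_zero]

lemma MOO.count_fromBlocks {A : Matrix ι ι ℝ} (hA : A.IsHermitian) (d : ℝ)
    (p : ℝ → Prop) [DecidablePred p]
    (hM : (Matrix.fromBlocks A 0 0 (Matrix.of fun (_ _ : Unit) => d)).IsHermitian) :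
    Fintype.card {i // p (hM.eigenvalues i)} =
      Fintype.card {i // p (hA.eigenvalues i)} + (if p d then 1 else 0) := by
  rw [MOO.hermitian_count hM p, MOO.hermitian_count hA p,
    Matrix.charpoly_fromBlocks_zero₁₂,
    Polynomial.roots_mul
      (mul_ne_zero (Matrix.charpoly_monic _).ne_zero (Matrix.charpoly_monic _).ne_zero),
    Multiset.countP_add]
  congr 1
  rw [MOO.charpoly_const_unit, Polynomial.roots_X_sub_C]
  by_cases h : p d <;> simp [h, Multiset.countP_eq_card_filter, Multiset.filter_singleton]

lemma MOO.bplus_fromBlocks {A : Matrix ι ι ℝ} (hA : A.IsHermitian) (d : ℝ) :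
    bplus (Matrix.fromBlocks A 0 0 (Matrix.of fun (_ _ : Unit) => d))
      = bplus A + (if 0 < d then 1 else 0) := by
  have hM := MOO.hermitian_fromBlocks hA d
  rw [bplus, bplus, dif_pos hM, dif_pos hA]
  exact MOO.count_fromBlocks hA d (fun x => 0 < x) hM

lemma MOO.bminus_fromBlocks {A : Matrix ι ι ℝ} (hA : A.IsHermitian) (d : ℝ) :
    bminus (Matrix.fromBlocks A 0 0 (Matrix.of fun (_ _ : Unit) => d))
      = bminus A + (if d < 0 then 1 else 0) := by
  have hM := MOO.hermitian_fromBlocks hA d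
  rw [bminus, bminus, dif_pos hM, dif_pos hA]
  exact MOO.count_fromBlocks hA d (fun x => x < 0) hM

end Aux

/-- for `m > 0`, `ξ = exp(2πi·a/m)` with `gcd(a,m) = 1`, and `L` a
nondegenerate symmetric integer matrix, if the Gauss sum `g = ∑_{i ∈ ℤ/m} ξ^{i²}` is
nonzero, then `(∑_{x ∈ (ℤ/m)^n} ξ^{ᵗxLx})·g^{-b₊}·ḡ^{-b₋}` is invariant under the
stabilization `L ↦ L ⊕ (±1)`. -/
theorem stmt10 (n m : ℕ) (hm : 0 < m) (a : ℤ) (ha : Int.gcd a m = 1)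
    (L : Matrix (Fin n) (Fin n) ℤ) (hL : L.IsSymm) (hdet : L.det ≠ 0)
    (ε : ℤ) (hε : ε = 1 ∨ ε = -1)
    (ξ : ℂ) (hξ : ξ = Complex.exp (2 * Real.pi * Complex.I * a / m))
    (g : ℂ) (hg : g = ∑ i : Fin m, ξ ^ ((i : ℕ) ^ 2)) (hg0 : g ≠ 0) :
    mooQuantity m ξ g
        (Matrix.fromBlocks L 0 0 (Matrix.of fun (_ _ : Unit) => ε)) =
      mooQuantity m ξ g L := by
  classical
  set E : Matrix Unit Unit ℤ := Matrix.of fun _ _ => ε with hE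
  have hLH : (L.map (Int.cast : ℤ → ℝ)).IsHermitian := MOO.hermitian_map_int hL
  have hξ0 : ξ ≠ 0 := by rw [hξ]; exact Complex.exp_ne_zero _
  have hconjξ : (starRingEnd ℂ) ξ = ξ⁻¹ := by
    rw [hξ, ← Complex.exp_conj, ← Complex.exp_neg]
    congr 1
    simp [map_div₀, map_ofNat]
    ring
  have hgc0 : (starRingEnd ℂ) g ≠ 0 := by
    intro hcontr
    apply hg0
    have := congrArg (starRingEnd ℂ) hcontr
    simpa using this
  have hgc : (starRingEnd ℂ) g = ∑ i : Fin m, ξ ^ (-(((i : ℕ) : ℤ) ^ 2)) := by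
    rw [hg, map_sum]
    refine Finset.sum_congr rfl fun i _ => ?_
    have hcast : ((((i : ℕ) ^ 2 : ℕ)) : ℤ) = ((i : ℕ) : ℤ) ^ 2 := by push_cast; ring
    rw [map_pow, hconjξ, inv_pow, ← zpow_natCast ξ, hcast, ← _root_.zpow_neg]
  have hGauss : (∑ y : Fin m, ξ ^ (ε * ((y : ℕ) : ℤ) ^ 2))
      = if ε = 1 then g else (starRingEnd ℂ) g := by
    rcases hε with h | h
    · subst h
      rw [if_pos rfl, hg]
      refine Finset.sum_congr rfl fun i _ => ?_
      rw [one_mul, ← zpow_natCast ξ]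
      congr 1
    · subst h
      rw [if_neg (by norm_num), hgc]
      refine Finset.sum_congr rfl fun i _ => ?_
      congr 1
      ring
  -- sum splitting
  let e : ((Fin n → Fin m) × Fin m) ≃ ((Fin n ⊕ Unit) → Fin m) :=
    { toFun := fun p => Sum.elim p.1 fun _ => p.2
      invFun := fun v => (fun i => v (Sum.inl i), v (Sum.inr ()))
      left_inv := fun p => rfl
      right_inv := fun v => by
        funext i
        cases i with
        | inl i => rfl
        | inr u => rfl }
  have hsum : (∑ x : (Fin n ⊕ Unit) → Fin m,
        ξ ^ ((fun i => ((x i : ℕ) : ℤ)) ⬝ᵥ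
          (Matrix.fromBlocks L 0 0 E).mulVec fun i => ((x i : ℕ) : ℤ)))
      = (∑ x : Fin n → Fin m,
          ξ ^ ((fun i => ((x i : ℕ) : ℤ)) ⬝ᵥ L.mulVec fun i => ((x i : ℕ) : ℤ)))
        * (∑ y : Fin m, ξ ^ (ε * ((y : ℕ) : ℤ) ^ 2)) := by
    rw [← Equiv.sum_comp e, Fintype.sum_prod_type, Finset.sum_mul_sum]
    refine Finset.sum_congr rfl fun x _ => Finset.sum_congr rfl fun y _ => ?_
    have hv : (fun i => (((e (x, y)) i : ℕ) : ℤ))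
        = Sum.elim (fun i => ((x i : ℕ) : ℤ)) (fun _ => ((y : ℕ) : ℤ)) := by
      funext i
      cases i with
      | inl i => rfl
      | inr u => rfl
    show ξ ^ ((fun i => (((e (x, y)) i : ℕ) : ℤ)) ⬝ᵥ _) = _
    rw [hv, Matrix.fromBlocks_mulVec, Matrix.zero_mulVec, Matrix.zero_mulVec, add_zero,
      zero_add, sumElim_dotProduct_sumElim, zpow_add₀ hξ0]
    congr 2
    simp [dotProduct, Matrix.mulVec, hE]
    ring
  have hmap : (Matrix.fromBlocks L 0 0 E).map (Int.cast : ℤ → ℝ)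
      = Matrix.fromBlocks (L.map (Int.cast : ℤ → ℝ)) 0 0
          (Matrix.of fun (_ _ : Unit) => (ε : ℝ)) := by
    ext i j
    cases i <;> cases j <;>
      simp [hE, Matrix.fromBlocks, Matrix.map_apply]
  have hbp : bplus ((Matrix.fromBlocks L 0 0 E).map (Int.cast : ℤ → ℝ))
      = bplus (L.map (Int.cast : ℤ → ℝ)) + (if 0 < (ε : ℝ) then 1 else 0) := by
    rw [hmap]; exact MOO.bplus_fromBlocks hLH _
  have hbm : bminus ((Matrix.fromBlocks L 0 0 E).map (Int.cast : ℤ → ℝ))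
      = bminus (L.map (Int.cast : ℤ → ℝ)) + (if (ε : ℝ) < 0 then 1 else 0) := by
    rw [hmap]; exact MOO.bminus_fromBlocks hLH _
  rw [mooQuantity, mooQuantity, hsum, hGauss, hbp, hbm]
  have key : ∀ (w : ℂ), w ≠ 0 → ∀ k : ℕ, w * w ^ (-((k + 1 : ℕ) : ℤ)) = w ^ (-(k : ℤ)) := by
    intro w hw k
    rw [show (-((k + 1 : ℕ) : ℤ)) = (-(k : ℤ)) + -1 by push_cast; ring, zpow_add₀ hw,
      _root_.zpow_neg_one]
    calc w * (w ^ (-(k : ℤ)) * w⁻¹) = w ^ (-(k : ℤ)) * (w * w⁻¹) := by ring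
      _ = w ^ (-(k : ℤ)) := by rw [mul_inv_cancel₀ hw, mul_one]
  have alg1 : ∀ (S w c : ℂ), w ≠ 0 → ∀ k : ℕ,
      S * w * w ^ (-((k + 1 : ℕ) : ℤ)) * c = S * w ^ (-(k : ℤ)) * c := by
    intro S w c hw k
    calc S * w * w ^ (-((k + 1 : ℕ) : ℤ)) * c
        = S * (w * w ^ (-((k + 1 : ℕ) : ℤ))) * c := by ring
      _ = _ := by rw [key w hw k]
  have alg2 : ∀ (S w c : ℂ), w ≠ 0 → ∀ k : ℕ,
      S * w * c * w ^ (-((k + 1 : ℕ) : ℤ)) = S * c * w ^ (-(k : ℤ)) := by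
    intro S w c hw k
    calc S * w * c * w ^ (-((k + 1 : ℕ) : ℤ))
        = S * c * (w * w ^ (-((k + 1 : ℕ) : ℤ))) := by ring
      _ = _ := by rw [key w hw k]
  rcases hε with h | h
  · subst h
    rw [if_pos rfl,
      show (if 0 < ((1 : ℤ) : ℝ) then 1 else 0) = 1 by norm_num,
      show (if ((1 : ℤ) : ℝ) < 0 then 1 else 0) = 0 by norm_num, add_zero]
    exact alg1 _ g _ hg0 _
  · subst h
    rw [if_neg (by norm_num),
      show (if 0 < ((-1 : ℤ) : ℝ) then 1 else 0) = 0 by norm_num,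
      show (if ((-1 : ℤ) : ℝ) < 0 then 1 else 0) = 1 by norm_num, add_zero]
    exact alg2 _ (starRingEnd ℂ g) _ hgc0 _
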